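/- On a pseudo-Hermitian vector space of dimension m ≥ 4, the map π₄ := −(1/(m−2)) σ ∘ J* ∘ τ₁ is a projection from 𝔥₋ onto W₄,₋ := Range(σ), where σ(φ)(x,y;z) := φ(Jx)⟨y,z⟩ − φ(Jy)⟨x,z⟩ + φ(x)⟨Jy,z⟩ − φ(y)⟨Jx,z⟩ and (J*φ)(x) := φ(Jx). -/

import Mathlib

/-- `σ(φ)(x,y;z) := φ(Jx)⟨y,z⟩ − φ(Jy)⟨x,z⟩ + φ(x)⟨Jy,z⟩ − φ(y)⟨Jx,z⟩`. -/
noncomputable def sigmaT {V : Type*} [AddCommGroup V] [Module ℝ V]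
    (B : V →ₗ[ℝ] V →ₗ[ℝ] ℝ) (J : V →ₗ[ℝ] V) (φ : V → ℝ) (x y z : V) : ℝ :=
  φ (J x) * B y z - φ (J y) * B x z + φ x * B (J y) z - φ y * B (J x) z

/-- `τ₁(H)(x) := Σ ε^{ij} H(x,e_i;e_j)`. -/
noncomputable def tauOne {V : Type*} [AddCommGroup V] [Module ℝ V] {m : ℕ}
    (b : Module.Basis (Fin m) ℝ V) (Einv : Matrix (Fin m) (Fin m) ℝ)
    (H : V → V → V → ℝ) (x : V) : ℝ :=
  ∑ i, ∑ j, Einv i j * H x (b i) (b j)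

/-- `π₄ := -(1/(m-2)) σ ∘ J^* ∘ τ₁`. -/
noncomputable def piFour {V : Type*} [AddCommGroup V] [Module ℝ V] {m : ℕ}
    (B : V →ₗ[ℝ] V →ₗ[ℝ] ℝ) (J : V →ₗ[ℝ] V)
    (b : Module.Basis (Fin m) ℝ V) (Einv : Matrix (Fin m) (Fin m) ℝ)
    (H : V → V → V → ℝ) (x y z : V) : ℝ :=
  -(1/((m : ℝ) - 2)) * sigmaT B J (fun v => tauOne b Einv H (J v)) x y z

/-- On a pseudo-Hermitian vector space of dimension `m ≥ 4`, `π₄` is a projection from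
`𝔥₋` onto `W₄,₋ = Range(σ)`: for `H ∈ 𝔥₋`, `π₄H` lies in the range of `σ` (over linear
functionals `φ`), and `π₄(σφ) = σφ` for every linear functional `φ`. -/
theorem stmt_11 {V : Type*} [AddCommGroup V] [Module ℝ V] {m : ℕ} (hm : 4 ≤ m)
    (B : V →ₗ[ℝ] V →ₗ[ℝ] ℝ) (J : V →ₗ[ℝ] V)
    (hBsymm : ∀ x y, B x y = B y x)
    (hBnd : ∀ x, (∀ y, B x y = 0) → x = 0)
    (hJ2 : ∀ x, J (J x) = -x)
    (hJB : ∀ x y, B (J x) (J y) = B x y)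
    (b : Module.Basis (Fin m) ℝ V)
    (Einv : Matrix (Fin m) (Fin m) ℝ)
    (hE1 : Einv * (Matrix.of fun i j => B (b i) (b j)) = 1)
    (hE2 : (Matrix.of fun i j => B (b i) (b j)) * Einv = 1) :
    (∀ H : V →ₗ[ℝ] V →ₗ[ℝ] V →ₗ[ℝ] ℝ,
      (∀ x y z, H x y z = - H y x z) →
      (∀ x y z, H (J x) (J y) z = - H x y z) →
      ∃ ψ : V →ₗ[ℝ] ℝ, ∀ x y z,
        piFour B J b Einv (fun a c d => H a c d) x y z = sigmaT B J ψ x y z) ∧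
    (∀ φ : V →ₗ[ℝ] ℝ, ∀ x y z,
      piFour B J b Einv (sigmaT B J φ) x y z = sigmaT B J φ x y z) := by

  -- Einv is symmetric
  set G := (Matrix.of fun i j => B (b i) (b j) : Matrix (Fin m) (Fin m) ℝ) with hGdef
  have hGsymm : Matrix.transpose G = G := by
    ext i j
    simp only [Matrix.transpose_apply, hGdef, Matrix.of_apply]
    exact hBsymm (b j) (b i)
  have hEsymm : ∀ i j, Einv i j = Einv j i := by
    have h : Matrix.transpose Einv = Einv := by
      calc Matrix.transpose Einv = Matrix.transpose Einv * (G * Einv) := by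
            rw [hE2, Matrix.mul_one]
        _ = (Matrix.transpose Einv * Matrix.transpose G) * Einv := by
            rw [hGsymm, Matrix.mul_assoc]
        _ = Matrix.transpose (G * Einv) * Einv := by rw [Matrix.transpose_mul]
        _ = Einv := by rw [hE2, Matrix.transpose_one, Matrix.one_mul]
    intro i j
    conv_lhs => rw [← h]
    rfl
  -- key contraction lemma
  have hkey : ∀ (f : V →ₗ[ℝ] ℝ) (w : V),
      (∑ i, ∑ j, Einv i j * (f (b i) * B w (b j))) = f w := by
    intro f w
    have hw : ∀ j, B w (b j) = ∑ k, b.repr w k * B (b k) (b j) := by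
      intro j
      conv_lhs => rw [← b.sum_repr w]
      simp [map_sum, map_smul, -Module.Basis.sum_repr]
    have h1 : ∀ i k, (∑ j, Einv i j * B (b k) (b j)) = if i = k then 1 else 0 := by
      intro i k
      have h := congrArg (fun M => M i k) hE1
      simp only [Matrix.mul_apply, Matrix.one_apply, hGdef, Matrix.of_apply] at h
      rw [← h]
      exact Finset.sum_congr rfl fun j _ => by rw [hBsymm (b k) (b j)]
    have h2 : ∀ i, (∑ j, Einv i j * B w (b j)) = b.repr w i := by
      intro i
      calc ∑ j, Einv i j * B w (b j)
          = ∑ j, ∑ k, b.repr w k * (Einv i j * B (b k) (b j)) := by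
            refine Finset.sum_congr rfl fun j _ => ?_
            rw [hw j, Finset.mul_sum]
            exact Finset.sum_congr rfl fun k _ => by ring
        _ = ∑ k, b.repr w k * ∑ j, Einv i j * B (b k) (b j) := by
            rw [Finset.sum_comm]
            exact Finset.sum_congr rfl fun k _ => by rw [Finset.mul_sum]
        _ = b.repr w i := by
            simp [h1]
    calc ∑ i, ∑ j, Einv i j * (f (b i) * B w (b j))
        = ∑ i, f (b i) * ∑ j, Einv i j * B w (b j) := by
          refine Finset.sum_congr rfl fun i _ => ?_
          rw [Finset.mul_sum]
          exact Finset.sum_congr rfl fun j _ => by ring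
      _ = ∑ i, f (b i) * b.repr w i := by simp [h2]
      _ = f w := by
          conv_rhs => rw [← b.sum_repr w]
          simp [map_sum, map_smul, mul_comm, -Module.Basis.sum_repr]
  -- trace lemma
  have htr : (∑ i, ∑ j, Einv i j * B (b i) (b j)) = (m : ℝ) := by
    have h := congrArg Matrix.trace hE1
    rw [Matrix.trace_one] at h
    simp only [Matrix.trace, Matrix.diag, Matrix.mul_apply, hGdef, Matrix.of_apply,
      Fintype.card_fin] at h
    rw [← h]
    exact Finset.sum_congr rfl fun i _ => Finset.sum_congr rfl fun j _ => by
      rw [hBsymm (b j) (b i)]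
  -- antisymmetric contraction vanishes
  have hA : ∀ u v, B (J u) v = - B (J v) u := by
    intro u v
    have h := hJB (J u) v
    rw [hJ2] at h
    rw [← h]
    simp [hBsymm u (J v)]
  have hzero : (∑ i, ∑ j, Einv i j * B (J (b i)) (b j)) = 0 := by
    have hS : (∑ i, ∑ j, Einv i j * B (J (b i)) (b j))
        = - ∑ i, ∑ j, Einv i j * B (J (b i)) (b j) := by
      conv_lhs => rw [Finset.sum_comm]
      rw [← Finset.sum_neg_distrib]
      refine Finset.sum_congr rfl fun j _ => ?_
      rw [← Finset.sum_neg_distrib]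
      refine Finset.sum_congr rfl fun i _ => ?_
      rw [hEsymm i j, hA (b i) (b j)]
      ring
    linarith
  -- the main tau computation
  have htau : ∀ (φ : V →ₗ[ℝ] ℝ) (x : V),
      tauOne b Einv (sigmaT B J ⇑φ) x = ((m : ℝ) - 2) * φ (J x) := by
    intro φ x
    have expand : tauOne b Einv (sigmaT B J ⇑φ) x
        = φ (J x) * (∑ i, ∑ j, Einv i j * B (b i) (b j))
          - (∑ i, ∑ j, Einv i j * ((φ.comp J) (b i) * B x (b j)))
          + φ x * (∑ i, ∑ j, Einv i j * B (J (b i)) (b j))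
          - (∑ i, ∑ j, Einv i j * (φ (b i) * B (J x) (b j))) := by
      simp only [tauOne, sigmaT, LinearMap.comp_apply, Finset.mul_sum,
        ← Finset.sum_sub_distrib, ← Finset.sum_add_distrib]
      refine Finset.sum_congr rfl fun i _ => ?_
      refine Finset.sum_congr rfl fun j _ => ?_
      ring
    rw [expand, htr, hzero, hkey (φ.comp J) x, hkey φ (J x)]
    simp only [LinearMap.comp_apply]
    ring
  constructor
  · intro H hHa hHb
    refine ⟨{ toFun := fun v => -(1/((m:ℝ)-2)) * tauOne b Einv (fun a c d => H a c d) (J v),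
              map_add' := ?_, map_smul' := ?_ }, ?_⟩
    · intro u v
      simp only [tauOne, map_add, LinearMap.add_apply, mul_add, Finset.sum_add_distrib]
    · intro c v
      simp only [tauOne, map_smul, LinearMap.smul_apply, smul_eq_mul, RingHom.id_apply,
        Finset.mul_sum]
      exact Finset.sum_congr rfl fun i _ => Finset.sum_congr rfl fun j _ => by ring
    · intro x y z
      simp only [piFour, sigmaT, LinearMap.coe_mk, AddHom.coe_mk]
      ring
  · intro φ x y z
    have hm2 : ((m:ℝ) - 2) ≠ 0 := by
      have h4 : (4:ℝ) ≤ (m:ℝ) := by exact_mod_cast hm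
      intro h; linarith
    have h1 : ∀ v, tauOne b Einv (sigmaT B J ⇑φ) (J v) = -(((m:ℝ)-2) * φ v) := by
      intro v
      rw [htau φ (J v), hJ2, map_neg]
      ring
    simp only [piFour, sigmaT, h1]
    field_simp
    ring
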